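/- Let n > 0, E ∈ ℝ, k ∈ ℝ, K > 0, and let P, u : ℝ → ℝ with u twice differentiable, u > 0, satisfying u''(x) + (E − P(x)) u(x) = −(n k/2) u(x)^((4−n)/n) for all x. Let σ be differentiable on an open interval I with σ'(t) = u(σ(t)), and let ψ : ℝ → ℝ be differentiable with ψ'(x)² = (4/(n K²)) P(x) for all x. Define a(t) = u(σ(t))^(−2/n), φ(t) = ψ(σ(t)), H(t) = a'(t)/a(t), and D = −12E/(n² K²). Then for all t ∈ I: φ'(t)² = −(2/K²)(H'(t) − k/a(t)²) − n D/(3 a(t)^n). -/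

import Mathlib

/-- Equation (3.4) of Theorem 1: the constructed scalar field
φ = ψ∘σ satisfies φ'² = −(2/K²)(H' − k/a²) − nD/(3aⁿ). -/
theorem scalar_field_kinetic_equation
    (n E k K : ℝ) (hn : 0 < n) (hK : 0 < K) (P u : ℝ → ℝ)
    (hu : Differentiable ℝ u) (hu' : Differentiable ℝ (deriv u))
    (hupos : ∀ x, 0 < u x)
    (hSchr : ∀ x, deriv (deriv u) x + (E - P x) * u x
      = -(n * k / 2) * u x ^ ((4 - n) / n))
    (t₁ t₂ : ℝ) (σ : ℝ → ℝ)
    (hσ : ∀ t ∈ Set.Ioo t₁ t₂, DifferentiableAt ℝ σ t)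
    (hσ' : ∀ t ∈ Set.Ioo t₁ t₂, deriv σ t = u (σ t))
    (ψ : ℝ → ℝ) (hψ : Differentiable ℝ ψ)
    (hψ' : ∀ x, (deriv ψ x) ^ 2 = 4 / (n * K ^ 2) * P x)
    (a φ H : ℝ → ℝ) (D : ℝ)
    (ha : a = fun t => u (σ t) ^ (-2 / n))
    (hφ : φ = fun t => ψ (σ t))
    (hH : H = fun t => deriv a t / a t)
    (hD : D = -12 * E / (n ^ 2 * K ^ 2)) :
    ∀ t ∈ Set.Ioo t₁ t₂,
      (deriv φ t) ^ 2
        = -(2 / K ^ 2) * (deriv H t - k / a t ^ 2) - n * D / (3 * a t ^ n) := by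
  intro t ht
  have hopen : IsOpen (Set.Ioo t₁ t₂) := isOpen_Ioo
  have hmem : Set.Ioo t₁ t₂ ∈ nhds t := hopen.mem_nhds ht
  have hux : ∀ y, u y ≠ 0 := fun y => (hupos y).ne'
  have hσd : HasDerivAt σ (u (σ t)) t := by
    have h := (hσ t ht).hasDerivAt
    rwa [hσ' t ht] at h
  -- derivative of φ
  have hφd : HasDerivAt φ (deriv ψ (σ t) * u (σ t)) t := by
    rw [hφ]
    exact ((hψ (σ t)).hasDerivAt).comp t hσd
  -- H equals -2/n * u'(σ s) on the interval
  have hHeq : ∀ s ∈ Set.Ioo t₁ t₂, H s = -2 / n * deriv u (σ s) := by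
    intro s hs
    have hσs : HasDerivAt σ (u (σ s)) s := by
      have h := (hσ s hs).hasDerivAt
      rwa [hσ' s hs] at h
    have huσ : HasDerivAt (fun t => u (σ t)) (deriv u (σ s) * u (σ s)) s :=
      ((hu (σ s)).hasDerivAt).comp s hσs
    have had : HasDerivAt a
        (deriv u (σ s) * u (σ s) * (-2 / n) * u (σ s) ^ (-2 / n - 1)) s := by
      rw [ha]
      exact huσ.rpow_const (Or.inl (hux (σ s)))
    have hpos := hupos (σ s)
    have h2 : u (σ s) ^ (-2 / n : ℝ) ≠ 0 := (Real.rpow_pos_of_pos hpos _).ne'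
    have h3 : u (σ s) ^ (-2 / n - 1 : ℝ) = u (σ s) ^ (-2 / n : ℝ) * (u (σ s))⁻¹ := by
      rw [show (-2 / n - 1 : ℝ) = -2 / n + (-1) by ring, Real.rpow_add hpos,
        Real.rpow_neg_one]
    rw [hH]
    simp only
    rw [had.deriv, ha]
    simp only
    rw [h3]
    field_simp
  have hHev : H =ᶠ[nhds t] fun s => -2 / n * deriv u (σ s) :=
    Filter.eventuallyEq_of_mem hmem hHeq
  have hH'd : HasDerivAt (fun s => -2 / n * deriv u (σ s))
      (-2 / n * (deriv (deriv u) (σ t) * u (σ t))) t :=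
    (((hu' (σ t)).hasDerivAt).comp t hσd).const_mul (-2 / n)
  have hderivH : deriv H t = -2 / n * (deriv (deriv u) (σ t) * u (σ t)) := by
    rw [hHev.deriv_eq, hH'd.deriv]
  -- algebra
  set v := u (σ t) with hv
  have hpos : 0 < v := hupos (σ t)
  have hA : (0:ℝ) < v ^ (4 / n : ℝ) := Real.rpow_pos_of_pos hpos _
  have hn' : (n:ℝ) ≠ 0 := hn.ne'
  have e2 : v ^ ((4 - n) / n : ℝ) * v = v ^ (4 / n : ℝ) := by
    have h := Real.rpow_add_one (hux (σ t)) ((4 - n) / n)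
    rw [show ((4 - n) / n + 1 : ℝ) = 4 / n by field_simp; ring] at h
    exact h.symm
  have e3 : (v ^ (-2 / n : ℝ)) ^ (2:ℕ) = (v ^ (4 / n : ℝ))⁻¹ := by
    rw [← Real.rpow_natCast (v ^ (-2/n:ℝ)) 2, ← Real.rpow_mul hpos.le]
    rw [show (-2 / n * (2:ℕ) : ℝ) = -(4/n) by push_cast; ring, Real.rpow_neg hpos.le]
  have e4 : (v ^ (-2 / n : ℝ)) ^ (n : ℝ) = (v ^ (2:ℕ))⁻¹ := by
    rw [← Real.rpow_mul hpos.le, show (-2 / n * n : ℝ) = -(2:ℕ) by push_cast; field_simp,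
      Real.rpow_neg hpos.le, Real.rpow_natCast]
  have hsv : deriv (deriv u) (σ t) * v = -(E - P (σ t)) * v ^ 2
      - n * k / 2 * v ^ (4 / n : ℝ) := by
    have h := hSchr (σ t)
    rw [← hv] at h
    linear_combination v * h - (n * k / 2) * e2
  rw [hφd.deriv, mul_pow, hψ' (σ t), hderivH, ha, hD]
  simp only
  rw [← hv, e3, e4, hsv]
  have hK2 : (K:ℝ) ≠ 0 := hK.ne'
  field_simp
  ring
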